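/- Define $S(n,d) = \sum_{i=0}^{n-1} \frac{1}{1 - \binom{i}{d}/\binom{n}{d}}$ as a real number. Fix a natural number $d \geq 1$. Then $$\lim_{n \to \infty} \frac{S(n,d)}{n \log n} \;=\; \frac{1}{d},$$ i.e., the sequence $n \mapsto \frac{S(n,d)}{n \log n}$ tends to $\frac{1}{d}$. -/

import Mathlib

open Finset Real Filter Topology


lemma one_sub_pow_eq (x : ℝ) (d : ℕ) : 1 - x ^ d = (1 - x) * ∑ k ∈ range d, x ^ k := by
  linear_combination geom_sum_mul x d

lemma one_sub_pow_le (x : ℝ) (hx0 : 0 ≤ x) (hx1 : x ≤ 1) (k : ℕ) :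
    1 - x ^ k ≤ k * (1 - x) := by
  rw [one_sub_pow_eq, mul_comm]
  apply mul_le_mul_of_nonneg_right _ (by linarith)
  calc ∑ j ∈ range k, x ^ j ≤ ∑ j ∈ range k, 1 :=
        sum_le_sum fun j _ => pow_le_one₀ hx0 hx1
    _ = k := by simp

lemma sum_range_cast (d : ℕ) : ∑ k ∈ range d, (k : ℝ) = d * (d - 1) / 2 := by
  induction d with
  | zero => simp
  | succ n ih => rw [sum_range_succ, ih]; push_cast; ring

lemma geom_one_le {x : ℝ} (hx0 : 0 ≤ x) {d : ℕ} (hd : 1 ≤ d) :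
    (1 : ℝ) ≤ ∑ k ∈ range d, x ^ k := by
  calc (1:ℝ) = ∑ k ∈ range 1, x ^ k := by simp
    _ ≤ ∑ k ∈ range d, x ^ k := by
        apply sum_le_sum_of_subset_of_nonneg (range_subset_range.2 hd)
        intro i _ _; positivity

lemma L3a {x : ℝ} (hx0 : 0 ≤ x) (hx1 : x < 1) {d : ℕ} (hd : 1 ≤ d) :
    1 / (d * (1 - x)) ≤ 1 / (1 - x ^ d) := by
  have h1 : 0 < 1 - x ^ d := by
    have := pow_lt_one₀ hx0 hx1 (by omega : d ≠ 0); linarith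
  apply one_div_le_one_div_of_le h1
  rw [one_sub_pow_eq]
  have hg : ∑ k ∈ range d, x ^ k ≤ d := by
    calc ∑ k ∈ range d, x ^ k ≤ ∑ k ∈ range d, 1 :=
          sum_le_sum fun j _ => pow_le_one₀ hx0 hx1.le
      _ = d := by simp
  calc (1 - x) * ∑ k ∈ range d, x ^ k ≤ (1 - x) * d :=
        mul_le_mul_of_nonneg_left hg (by linarith)
    _ = d * (1 - x) := by ring

lemma L3b {x : ℝ} (hx0 : 0 ≤ x) (hx1 : x < 1) {d : ℕ} (hd : 1 ≤ d) :
    1 / (1 - x ^ d) ≤ 1 / (d * (1 - x)) + (d - 1) / 2 := by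
  set g : ℝ := ∑ k ∈ range d, x ^ k with hg
  have hg1 : (1 : ℝ) ≤ g := geom_one_le hx0 hd
  have hu : (0:ℝ) < 1 - x := by linarith
  have hdg : (d : ℝ) - g ≤ (1 - x) * (d * (d - 1) / 2) := by
    have : (d : ℝ) - g = ∑ k ∈ range d, (1 - x ^ k) := by
      rw [sum_sub_distrib]; simp [hg]
    rw [this]
    calc ∑ k ∈ range d, (1 - x ^ k) ≤ ∑ k ∈ range d, (k : ℝ) * (1 - x) :=
          sum_le_sum fun k _ => one_sub_pow_le x hx0 hx1.le k
      _ = (1 - x) * (d * (d - 1) / 2) := by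
          rw [← sum_mul, sum_range_cast]; ring
  have hEq : 1 - x ^ d = (1 - x) * g := one_sub_pow_eq x d
  have hd0 : (0:ℝ) < d := by exact_mod_cast hd
  rw [hEq, div_le_iff₀ (by positivity)]
  have hd1 : (1:ℝ) ≤ (d:ℝ) := by exact_mod_cast hd
  have key : (d:ℝ) ≤ g + (1 - x) * ((d:ℝ) * ((d:ℝ) - 1) / 2) * g := by
    nlinarith [mul_le_mul_of_nonneg_left hg1 (mul_nonneg hu.le (by nlinarith : (0:ℝ) ≤ (d:ℝ) * ((d:ℝ)-1) / 2))]
  have h1 : (1:ℝ) ≤ g / d + ((d:ℝ) - 1) / 2 * ((1 - x) * g) := by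
    rw [div_add' _ _ _ (ne_of_gt hd0), le_div_iff₀ hd0]
    nlinarith [key]
  calc (1:ℝ) ≤ g / d + ((d:ℝ) - 1) / 2 * ((1 - x) * g) := h1
    _ = (1 / (↑d * (1 - x)) + (↑d - 1) / 2) * ((1 - x) * g) := by
        field_simp

lemma term1 {i n : ℕ} (h : i ≤ n) (k : ℕ) : (i - k) * n ≤ (n - k) * i := by
  rcases le_total i k with hk | hk
  · simp [Nat.sub_eq_zero_of_le hk]
  · rw [Nat.sub_mul, Nat.sub_mul, mul_comm n i]
    exact Nat.sub_le_sub_left (Nat.mul_le_mul_left k h) (i * n)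

lemma descF_upper {i n : ℕ} (h : i ≤ n) (d : ℕ) :
    i.descFactorial d * n ^ d ≤ n.descFactorial d * i ^ d := by
  rw [Nat.descFactorial_eq_prod_range, Nat.descFactorial_eq_prod_range,
    show n ^ d = ∏ _k ∈ range d, n from by simp,
    show i ^ d = ∏ _k ∈ range d, i from by simp,
    ← Finset.prod_mul_distrib, ← Finset.prod_mul_distrib]
  exact Finset.prod_le_prod' fun k _ => term1 h k

lemma choose_upper {i n : ℕ} (h : i ≤ n) (d : ℕ) :
    i.choose d * n ^ d ≤ n.choose d * i ^ d := by
  have key := descF_upper h d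
  rw [Nat.descFactorial_eq_factorial_mul_choose, Nat.descFactorial_eq_factorial_mul_choose] at key
  apply Nat.le_of_mul_le_mul_left _ (Nat.factorial_pos d)
  calc Nat.factorial d * (i.choose d * n ^ d) = Nat.factorial d * i.choose d * n ^ d := by ring
    _ ≤ Nat.factorial d * n.choose d * i ^ d := key
    _ = Nat.factorial d * (n.choose d * i ^ d) := by ring

lemma ratio_upper {i n d : ℕ} (hdn : d ≤ n) (hin : i ≤ n) (hn : 0 < n) :
    (i.choose d : ℝ) / (n.choose d : ℝ) ≤ ((i : ℝ) / (n : ℝ)) ^ d := by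
  have hc : (0:ℝ) < (n.choose d : ℝ) := by exact_mod_cast Nat.choose_pos hdn
  have hnp : (0:ℝ) < (n:ℝ) ^ d := by positivity
  rw [div_pow, div_le_div_iff₀ hc hnp]
  have := choose_upper hin d
  have h2 : ((i.choose d * n ^ d : ℕ) : ℝ) ≤ ((n.choose d * i ^ d : ℕ) : ℝ) := by exact_mod_cast this
  push_cast at h2
  linarith

lemma term2 {i n k d : ℕ} (hk : k + 1 ≤ d) (hdi : d - 1 ≤ i) (hin : i ≤ n) :
    (i - (d - 1)) * (n - k) ≤ (n - (d - 1)) * (i - k) := by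
  have hki : k ≤ i := le_trans (by omega) hdi
  have hkn : k ≤ n := hki.trans hin
  have hdn : d - 1 ≤ n := hdi.trans hin
  have h1 : 1 ≤ d := by omega
  zify [hdi, hdn, hki, hkn, h1]
  nlinarith [mul_nonneg (by omega : (0:ℤ) ≤ (d:ℤ) - 1 - k) (by omega : (0:ℤ) ≤ (n:ℤ) - i)]

lemma descF_lower {i n d : ℕ} (hdi : d - 1 ≤ i) (hin : i ≤ n) :
    (i - (d - 1)) ^ d * n.descFactorial d ≤ (n - (d - 1)) ^ d * i.descFactorial d := by
  rw [Nat.descFactorial_eq_prod_range, Nat.descFactorial_eq_prod_range,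
    show (i - (d-1)) ^ d = ∏ _k ∈ range d, (i - (d-1)) from by simp,
    show (n - (d-1)) ^ d = ∏ _k ∈ range d, (n - (d-1)) from by simp,
    ← Finset.prod_mul_distrib, ← Finset.prod_mul_distrib]
  exact Finset.prod_le_prod' fun k hk => term2 (Finset.mem_range.mp hk) hdi hin

lemma choose_lower_nat {i n d : ℕ} (hdi : d - 1 ≤ i) (hin : i ≤ n) :
    (i - (d - 1)) ^ d * n.choose d ≤ (n - (d - 1)) ^ d * i.choose d := by
  have key := descF_lower (d := d) hdi hin
  rw [Nat.descFactorial_eq_factorial_mul_choose, Nat.descFactorial_eq_factorial_mul_choose] at key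
  apply Nat.le_of_mul_le_mul_left _ (Nat.factorial_pos d)
  calc Nat.factorial d * ((i - (d-1)) ^ d * n.choose d) = (i - (d-1)) ^ d * (Nat.factorial d * n.choose d) := by ring
    _ ≤ (n - (d-1)) ^ d * (Nat.factorial d * i.choose d) := key
    _ = Nat.factorial d * ((n - (d-1)) ^ d * i.choose d) := by ring

lemma ratio_lower {i n d : ℕ} (hd : 1 ≤ d) (hdn : d ≤ n) (hdi : d - 1 ≤ i) (hin : i ≤ n) :
    (((i - (d - 1) : ℕ) : ℝ) / ((n - (d - 1) : ℕ) : ℝ)) ^ d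
      ≤ (i.choose d : ℝ) / (n.choose d : ℝ) := by
  have hm : 0 < n - (d - 1) := by omega
  have hc : (0:ℝ) < (n.choose d : ℝ) := by exact_mod_cast Nat.choose_pos hdn
  have hmp : (0:ℝ) < ((n - (d-1) : ℕ) : ℝ) ^ d := by positivity
  rw [div_pow, div_le_div_iff₀ hmp hc]
  have := choose_lower_nat hdi hin
  have h2 : (((i - (d-1)) ^ d * n.choose d : ℕ) : ℝ) ≤ (((n - (d-1)) ^ d * i.choose d : ℕ) : ℝ) := by
    exact_mod_cast this
  push_cast at h2
  linarith

lemma choose_lt {i n d : ℕ} (hd : 1 ≤ d) (hdn : d ≤ n) (hin : i < n) :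
    i.choose d < n.choose d := by
  obtain ⟨m, rfl⟩ : ∃ m, n = m + 1 := ⟨n - 1, by omega⟩
  obtain ⟨e, rfl⟩ : ∃ e, d = e + 1 := ⟨d - 1, by omega⟩
  have h1 : i.choose (e + 1) ≤ m.choose (e + 1) := Nat.choose_le_choose _ (by omega)
  have h2 : 0 < m.choose e := Nat.choose_pos (by omega)
  rw [Nat.choose_succ_succ]
  have h3 : m.choose e.succ = m.choose (e + 1) := rfl
  omega
noncomputable def S (n d : ℕ) : ℝ :=
  ∑ i ∈ Finset.range n, 1 / (1 - (i.choose d : ℝ) / (n.choose d : ℝ))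

lemma term_le {d n i : ℕ} (hd : 1 ≤ d) (hdn : d ≤ n) (hin : i < n) :
    1 / (1 - (i.choose d : ℝ) / (n.choose d : ℝ))
      ≤ (n : ℝ) / ((d : ℝ) * ((n : ℝ) - (i : ℝ))) + ((d : ℝ) - 1) / 2 := by
  have hn0 : (0:ℝ) < n := by
    have : 0 < n := by omega
    exact_mod_cast this
  set r : ℝ := (i.choose d : ℝ) / (n.choose d : ℝ) with hr
  set x : ℝ := (i : ℝ) / (n : ℝ) with hx
  have hx0 : 0 ≤ x := by positivity
  have hx1 : x < 1 := by
    rw [hx, div_lt_one hn0]; exact_mod_cast hin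
  have hrle : r ≤ x ^ d := ratio_upper hdn hin.le (by omega)
  have hr0 : 0 ≤ r := by positivity
  have hxd : x ^ d < 1 := pow_lt_one₀ hx0 hx1 (by omega)
  have h1 : 1 / (1 - r) ≤ 1 / (1 - x ^ d) :=
    one_div_le_one_div_of_le (by linarith) (by linarith)
  have h2 := L3b hx0 hx1 hd
  have hni : (0:ℝ) < (n:ℝ) - i := by
    have : (i:ℝ) < n := by exact_mod_cast hin
    linarith
  have hd0 : (0:ℝ) < d := by exact_mod_cast hd
  have h3 : 1 / ((d:ℝ) * (1 - x)) = (n:ℝ) / ((d:ℝ) * ((n:ℝ) - i)) := by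
    rw [hx]; field_simp
  linarith

lemma term_ge {d n i : ℕ} (hd : 1 ≤ d) (hdn : d ≤ n) (hdi : d - 1 ≤ i) (hin : i < n) :
    ((n - (d-1) : ℕ) : ℝ) / ((d : ℝ) * (((n - (d-1) : ℕ) : ℝ) - ((i - (d-1) : ℕ) : ℝ)))
      ≤ 1 / (1 - (i.choose d : ℝ) / (n.choose d : ℝ)) := by
  set m : ℕ := n - (d-1) with hm
  set j : ℕ := i - (d-1) with hj
  have hjm : j < m := by omega
  have hm0 : (0:ℝ) < m := by
    have : 0 < m := by omega
    exact_mod_cast this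
  set y : ℝ := (j : ℝ) / (m : ℝ) with hy
  have hy0 : 0 ≤ y := by positivity
  have hy1 : y < 1 := by
    rw [hy, div_lt_one hm0]; exact_mod_cast hjm
  set r : ℝ := (i.choose d : ℝ) / (n.choose d : ℝ) with hr
  have hyd : y ^ d ≤ r := by
    rw [hy, hr]; exact ratio_lower hd hdn hdi hin.le
  have hr1 : r < 1 := by
    rw [hr, div_lt_one (by exact_mod_cast Nat.choose_pos hdn)]
    exact_mod_cast choose_lt hd hdn hin
  have hyd1 : y ^ d < 1 := pow_lt_one₀ hy0 hy1 (by omega)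
  have h1 : 1 / (1 - y ^ d) ≤ 1 / (1 - r) :=
    one_div_le_one_div_of_le (by linarith) (by linarith)
  have h2 := L3a hy0 hy1 hd
  have hd0 : (0:ℝ) < d := by exact_mod_cast hd
  have hmj : (0:ℝ) < (m:ℝ) - j := by
    have : (j:ℝ) < m := by exact_mod_cast hjm
    linarith
  have h3 : 1 / ((d:ℝ) * (1 - y)) = (m:ℝ) / ((d:ℝ) * ((m:ℝ) - j)) := by
    rw [hy]; field_simp
  linarith

lemma sum_inv_reflect (n : ℕ) :
    ∑ i ∈ range n, (1:ℝ) / ((n:ℝ) - (i:ℝ)) = ∑ i ∈ range n, (1:ℝ) / ((i:ℝ) + 1) := by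
  rw [← Finset.sum_range_reflect (fun i => (1:ℝ) / ((i:ℝ) + 1)) n]
  apply Finset.sum_congr rfl
  intro j hj
  have hj' : j < n := mem_range.mp hj
  have h1 : ((n - 1 - j : ℕ) : ℝ) = (n:ℝ) - 1 - (j:ℝ) := by
    rw [Nat.sub_sub, Nat.cast_sub (by omega)]
    push_cast; ring
  rw [h1]; ring_nf

lemma sum_frac {d m : ℕ} (hd : 1 ≤ d) :
    ∑ j ∈ range m, (m:ℝ) / ((d:ℝ) * ((m:ℝ) - (j:ℝ)))
      = (m:ℝ) / (d:ℝ) * ∑ j ∈ range m, (1:ℝ) / ((j:ℝ) + 1) := by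
  rw [← sum_inv_reflect, Finset.mul_sum]
  apply Finset.sum_congr rfl
  intro j hj
  have hj' : j < m := mem_range.mp hj
  have hmj : (0:ℝ) < (m:ℝ) - j := by
    have : (j:ℝ) < m := by exact_mod_cast hj'
    linarith
  have hd0 : (0:ℝ) < d := by exact_mod_cast hd
  field_simp

lemma S_upper {d n : ℕ} (hd : 1 ≤ d) (hdn : d ≤ n) :
    S n d ≤ (n:ℝ) / (d:ℝ) * (∑ i ∈ range n, (1:ℝ) / ((i:ℝ) + 1))
      + (n:ℝ) * ((d:ℝ) - 1) / 2 := by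
  unfold S
  calc ∑ i ∈ range n, 1 / (1 - (i.choose d : ℝ) / (n.choose d : ℝ))
      ≤ ∑ i ∈ range n, ((n : ℝ) / ((d : ℝ) * ((n : ℝ) - (i : ℝ))) + ((d : ℝ) - 1) / 2) :=
        Finset.sum_le_sum fun i hi => term_le hd hdn (mem_range.mp hi)
    _ = (n:ℝ) / (d:ℝ) * (∑ i ∈ range n, (1:ℝ) / ((i:ℝ) + 1)) + (n:ℝ) * ((d:ℝ) - 1) / 2 := by
        rw [Finset.sum_add_distrib, Finset.sum_const, card_range, sum_frac hd]
        rw [nsmul_eq_mul]; ring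

lemma S_lower {d n : ℕ} (hd : 1 ≤ d) (hdn : d ≤ n) :
    ((n - (d-1) : ℕ) : ℝ) / (d:ℝ)
        * (∑ i ∈ range (n - (d-1)), (1:ℝ) / ((i:ℝ) + 1)) ≤ S n d := by
  set m : ℕ := n - (d-1) with hm
  have step1 : ∑ i ∈ Finset.Ico (d-1) n, 1 / (1 - (i.choose d : ℝ) / (n.choose d : ℝ)) ≤ S n d := by
    unfold S
    apply Finset.sum_le_sum_of_subset_of_nonneg
    · intro x hx
      rw [Finset.mem_Ico] at hx
      rw [Finset.mem_range]
      omega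
    · intro i hi _
      have hin : i < n := mem_range.mp hi
      have hr1 : (i.choose d : ℝ) / (n.choose d : ℝ) < 1 := by
        rw [div_lt_one (by exact_mod_cast Nat.choose_pos hdn)]
        exact_mod_cast choose_lt hd hdn hin
      exact div_nonneg zero_le_one (by linarith)
  have step2 : ∑ i ∈ Finset.Ico (d-1) n, ((m:ℝ) / ((d:ℝ) * ((m:ℝ) - ((i - (d-1) : ℕ):ℝ))))
      ≤ ∑ i ∈ Finset.Ico (d-1) n, 1 / (1 - (i.choose d : ℝ) / (n.choose d : ℝ)) := by
    apply Finset.sum_le_sum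
    intro i hi
    obtain ⟨h1, h2⟩ := Finset.mem_Ico.mp hi
    exact term_ge hd hdn h1 h2
  have step3 : ∑ i ∈ Finset.Ico (d-1) n, ((m:ℝ) / ((d:ℝ) * ((m:ℝ) - ((i - (d-1) : ℕ):ℝ))))
      = ∑ j ∈ range m, (m:ℝ) / ((d:ℝ) * ((m:ℝ) - (j:ℝ))) := by
    rw [Finset.sum_Ico_eq_sum_range]
    apply Finset.sum_congr rfl
    intro j _
    have hidx : d - 1 + j - (d - 1) = j := by omega
    rw [hidx]
  calc ((m:ℕ):ℝ) / (d:ℝ) * (∑ i ∈ range m, (1:ℝ) / ((i:ℝ) + 1))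
      = ∑ j ∈ range m, (m:ℝ) / ((d:ℝ) * ((m:ℝ) - (j:ℝ))) := (sum_frac hd).symm
    _ ≤ S n d := by rw [← step3]; exact step2.trans step1
lemma harmonic_cast (n : ℕ) :
    ∑ i ∈ range n, (1:ℝ) / ((i:ℝ) + 1) = ((harmonic n : ℚ) : ℝ) := by
  rw [harmonic]
  push_cast
  simp [one_div]

lemma Hn_le (n : ℕ) : ∑ i ∈ range n, (1:ℝ) / ((i:ℝ) + 1) ≤ 1 + Real.log n := by
  rw [harmonic_cast]; exact harmonic_le_one_add_log n

lemma le_Hn (n : ℕ) : Real.log ((n:ℝ) + 1) ≤ ∑ i ∈ range n, (1:ℝ) / ((i:ℝ) + 1) := by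
  rw [harmonic_cast]
  have := log_add_one_le_harmonic n
  push_cast at this ⊢
  linarith

theorem S_limit (d : ℕ) (hd : 1 ≤ d) :
    Filter.Tendsto (fun n : ℕ => S n d / ((n : ℝ) * Real.log n))
      Filter.atTop (nhds (1 / (d : ℝ))) := by
  have hd0 : (0:ℝ) < d := by exact_mod_cast hd
  have hlogT : Tendsto (fun n : ℕ => Real.log n) atTop atTop :=
    Real.tendsto_log_atTop.comp tendsto_natCast_atTop_atTop
  have hinv : Tendsto (fun n : ℕ => 1 / Real.log n) atTop (𝓝 0) := by
    simpa [one_div, Pi.inv_def] using hlogT.inv_tendsto_atTop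
  set m : ℕ → ℕ := fun n => n - (d - 1) with hmdef
  -- upper function
  set hi : ℕ → ℝ := fun n => 1 / (d:ℝ) + (1 / (d:ℝ) + ((d:ℝ) - 1) / 2) * (1 / Real.log n)
    with hidef
  have hhi : Tendsto hi atTop (𝓝 (1 / (d:ℝ))) := by
    have h : Tendsto (fun n : ℕ => 1 / (d:ℝ) + (1 / (d:ℝ) + ((d:ℝ) - 1) / 2) * (1 / Real.log n))
        atTop (𝓝 (1 / (d:ℝ) + (1 / (d:ℝ) + ((d:ℝ) - 1) / 2) * 0)) :=
      tendsto_const_nhds.add (tendsto_const_nhds.mul hinv)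
    simpa [hidef, one_div] using h
  -- (m n : ℝ)/n → 1
  have hmn : Tendsto (fun n : ℕ => ((m n : ℕ) : ℝ) / (n:ℝ)) atTop (𝓝 1) := by
    have h1 : Tendsto (fun n : ℕ => 1 - ((d:ℝ) - 1) / (n:ℝ)) atTop (𝓝 1) := by
      have := (tendsto_const_nhds (x := (1:ℝ))).sub
        (tendsto_const_div_atTop_nhds_zero_nat ((d:ℝ) - 1))
      simpa using this
    apply h1.congr'
    filter_upwards [eventually_ge_atTop d] with n hn
    have hn0 : (0:ℝ) < n := by
      have : 0 < n := by omega
      exact_mod_cast this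
    have hc : ((m n : ℕ) : ℝ) = (n:ℝ) - ((d:ℝ) - 1) := by
      simp only [hmdef]
      rw [Nat.cast_sub (by omega)]
      push_cast [Nat.cast_sub hd]
      ring
    rw [hc]
    field_simp
  -- log(m n)/log n → 1
  have hlogm : Tendsto (fun n : ℕ => Real.log (m n) / Real.log n) atTop (𝓝 1) := by
    have h0 : Tendsto (fun n : ℕ => Real.log (((m n : ℕ) : ℝ) / (n:ℝ))) atTop (𝓝 0) := by
      have := ((Real.continuousAt_log one_ne_zero).tendsto).comp hmn
      simpa [Function.comp_def] using this
    have h1 : Tendsto (fun n : ℕ => 1 + Real.log (((m n : ℕ) : ℝ) / (n:ℝ)) * (1 / Real.log n))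
        atTop (𝓝 1) := by
      have h2 : Tendsto (fun n : ℕ => 1 + Real.log (((m n : ℕ) : ℝ) / (n:ℝ)) * (1 / Real.log n))
          atTop (𝓝 ((1:ℝ) + 0 * 0)) := tendsto_const_nhds.add (h0.mul hinv)
      simpa using h2
    apply h1.congr'
    filter_upwards [eventually_ge_atTop (d + 2)] with n hn
    have hm0 : (0:ℝ) < (m n : ℕ) := by
      have : 0 < m n := by simp only [hmdef]; omega
      exact_mod_cast this
    have hn0 : (0:ℝ) < n := by
      have : 0 < n := by omega
      exact_mod_cast this
    have hlogn : Real.log n ≠ 0 := by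
      have : (1:ℝ) < n := by
        have : 1 < n := by omega
        exact_mod_cast this
      exact (Real.log_pos this).ne'
    rw [Real.log_div hm0.ne' hn0.ne']
    field_simp
    ring
  -- lower function
  set lo : ℕ → ℝ := fun n => (((m n : ℕ) : ℝ) * Real.log (m n)) / ((d:ℝ) * ((n:ℝ) * Real.log n))
    with lodef
  have hlo : Tendsto lo atTop (𝓝 (1 / (d:ℝ))) := by
    have h1 : Tendsto (fun n : ℕ => 1 / (d:ℝ) * ((((m n : ℕ) : ℝ) / n) * (Real.log (m n) / Real.log n)))
        atTop (𝓝 (1 / (d:ℝ))) := by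
      have := (hmn.mul hlogm).const_mul (1 / (d:ℝ))
      simpa using this
    apply h1.congr'
    filter_upwards [eventually_ge_atTop (d + 2)] with n hn
    have hn0 : (0:ℝ) < n := by
      have : 0 < n := by omega
      exact_mod_cast this
    have hlogn : Real.log n ≠ 0 := by
      have : (1:ℝ) < n := by
        have : 1 < n := by omega
        exact_mod_cast this
      exact (Real.log_pos this).ne'
    simp only [lodef]
    field_simp
  -- squeeze
  apply tendsto_of_tendsto_of_tendsto_of_le_of_le' hlo hhi
  · -- lo ≤ f eventually
    filter_upwards [eventually_ge_atTop (d + 2)] with n hn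
    have hdn : d ≤ n := by omega
    have hn0 : (0:ℝ) < n := by
      have : 0 < n := by omega
      exact_mod_cast this
    have hlogn : (0:ℝ) < Real.log n := Real.log_pos (by exact_mod_cast (by omega : 1 < n))
    have hm1 : 1 ≤ m n := by simp only [hmdef]; omega
    have hm0 : (0:ℝ) < (m n : ℕ) := by exact_mod_cast hm1
    have hS := S_lower hd hdn
    have hH : Real.log (m n) ≤ ∑ i ∈ range (m n), (1:ℝ) / ((i:ℝ) + 1) := by
      refine le_trans ?_ (le_Hn (m n))
      apply Real.log_le_log hm0
      linarith
    have key : ((m n : ℕ) : ℝ) * Real.log (m n) / (d:ℝ) ≤ S n d := by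
      calc ((m n : ℕ) : ℝ) * Real.log (m n) / (d:ℝ)
          = ((m n : ℕ) : ℝ) / (d:ℝ) * Real.log (m n) := by ring
        _ ≤ ((m n : ℕ) : ℝ) / (d:ℝ) * (∑ i ∈ range (m n), (1:ℝ) / ((i:ℝ) + 1)) := by
            apply mul_le_mul_of_nonneg_left hH (by positivity)
        _ ≤ S n d := hS
    have hrw : lo n = (((m n : ℕ) : ℝ) * Real.log (m n) / (d:ℝ)) / ((n:ℝ) * Real.log n) := by
      simp only [lodef]
      rw [div_div]
    rw [hrw]
    gcongr
  · -- f ≤ hi eventually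
    filter_upwards [eventually_ge_atTop (d + 2)] with n hn
    have hdn : d ≤ n := by omega
    have hn0 : (0:ℝ) < n := by
      have : 0 < n := by omega
      exact_mod_cast this
    have hlogn : (0:ℝ) < Real.log n := Real.log_pos (by exact_mod_cast (by omega : 1 < n))
    have hS := S_upper hd hdn
    have hH := Hn_le n
    have key : S n d ≤ (n:ℝ) / (d:ℝ) * (1 + Real.log n) + (n:ℝ) * ((d:ℝ) - 1) / 2 := by
      refine hS.trans ?_
      have := mul_le_mul_of_nonneg_left hH (by positivity : (0:ℝ) ≤ (n:ℝ) / (d:ℝ))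
      linarith
    rw [div_le_iff₀ (by positivity)]
    calc S n d ≤ (n:ℝ) / (d:ℝ) * (1 + Real.log n) + (n:ℝ) * ((d:ℝ) - 1) / 2 := key
      _ = hi n * ((n:ℝ) * Real.log n) := by
          simp only [hidef]
          field_simp
          ring
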